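/- Let p be an odd prime with 2 ^ (p - 1) not congruent to 1 modulo p², and let q ≥ 1. Define φ : (Fin q → ZMod p) → ZMod (p ^ q) by φ g = ∑ i : Fin q, ((g i).val : ZMod (p ^ q)) * (p : ZMod (p ^ q)) ^ (i : ℕ). For x : ZMod (p ^ q), let D x := {y : ZMod (p ^ q) | ∃ m : ℕ, y = (2 : ZMod (p ^ q)) ^ m * x}. Suppose g : Fin q → ZMod p satisfies φ g ∈ D x. Then for every h : Fin q → ZMod p and every m : ℕ, φ ((2 : ZMod p) ^ m • g + h) ∈ {y | ∃ l : ℕ, y = (2 : ZMod (p ^ q)) ^ l * x + φ h}; consequently φ '' {g' + h | g' ∈ φ ⁻¹' (D x)} = {y | ∃ l : ℕ, y = (2 : ZMod (p ^ q)) ^ l * x + φ h}. -/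

import Mathlib

private lemma binom_aux (n : ℕ) (A : ℤ) :
    ∃ S : ℤ, (1 + A) ^ n = 1 + n * A + (n.choose 2) * A ^ 2 + A ^ 3 * S := by
  induction n with
  | zero => exact ⟨0, by norm_num⟩
  | succ n ih =>
    obtain ⟨S, hS⟩ := ih
    refine ⟨S + A * S + n.choose 2, ?_⟩
    rw [pow_succ, hS, Nat.choose_succ_succ, Nat.choose_one_right]
    push_cast
    ring

private lemma lift_aux (p : ℕ) (hp : p.Prime) (hodd : Odd p) (d : ℕ) (e : ℤ)
    (he : ¬ (p:ℤ) ∣ e) (h0 : (2:ℤ) ^ d = 1 + p * e) :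
    ∀ j : ℕ, ∃ t : ℤ, ¬ (p:ℤ) ∣ t ∧
      (2:ℤ) ^ (d * p ^ j) ≡ 1 + (p:ℤ) ^ (j+1) * t [ZMOD (p:ℤ) ^ (j+2)] := by
  have hp3 : 2 < p := lt_of_le_of_ne hp.two_le
    (fun h => absurd hodd (by rw [← h]; decide))
  intro j
  induction j with
  | zero =>
    refine ⟨e, he, ?_⟩
    rw [pow_zero, mul_one, h0, zero_add, pow_one]
  | succ j ih =>
    obtain ⟨t, ht, hmod⟩ := ih
    obtain ⟨r, hr⟩ := hmod.dvd
    have hE : (2:ℤ) ^ (d * p ^ j) = 1 + (p:ℤ)^(j+1) * (t - p * r) := by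
      have h1 : (1 + (p:ℤ)^(j+1) * t) - 2 ^ (d * p ^ j) = (p:ℤ)^(j+2) * r := hr
      have : (2:ℤ) ^ (d * p ^ j) = 1 + (p:ℤ)^(j+1) * t - (p:ℤ)^(j+2) * r := by
        linarith [h1]
      rw [this]; ring
    set E : ℤ := t - p * r with hEdef
    have hEnd : ¬ (p:ℤ) ∣ E := by
      intro hd
      apply ht
      have h2 : (p:ℤ) ∣ p * r := ⟨r, rfl⟩
      have h3 : t = E + p * r := by rw [hEdef]; ring
      rw [h3]; exact dvd_add hd h2
    obtain ⟨S, hS⟩ := binom_aux p ((p:ℤ)^(j+1) * E)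
    obtain ⟨c2, hc2⟩ := hp.dvd_choose_self (by norm_num) hp3
    refine ⟨E, hEnd, ?_⟩
    have hpow : (2:ℤ)^(d * p^(j+1)) = ((2:ℤ)^(d * p^j))^p := by
      rw [← pow_mul, pow_succ, mul_assoc]
    rw [hpow, hE, hS]
    refine (Int.modEq_iff_dvd.mpr ?_).symm
    refine ⟨(p:ℤ)^j * c2 * E^2 + (p:ℤ)^(2*j) * E^3 * S, ?_⟩
    have hc2' : ((p.choose 2 : ℕ) : ℤ) = (p : ℤ) * c2 := by exact_mod_cast congrArg Nat.cast hc2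
    rw [hc2']
    ring


private lemma base_aux (p : ℕ) (hp : p.Prime) (hodd : Odd p)
    (hw : ¬ (2 ^ (p - 1) ≡ 1 [MOD p ^ 2])) :
    ∃ (d : ℕ) (e : ℤ), (2:ℤ) ^ d = 1 + p * e ∧ ¬ (p:ℤ) ∣ e := by
  haveI : Fact p.Prime := ⟨hp⟩
  have h2p : Nat.Coprime 2 p := (Nat.coprime_primes Nat.prime_two hp).mpr
    (fun h => absurd hodd (by rw [← h]; decide))
  set u2p : (ZMod p)ˣ := ZMod.unitOfCoprime 2 h2p with hu2p
  set d := orderOf u2p with hd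
  have hpow : (2 : ZMod p) ^ d = 1 := by
    have := pow_orderOf_eq_one u2p
    have h2 : ((u2p : ZMod p)) ^ d = 1 := by
      rw [← Units.val_pow_eq_pow_val, this, Units.val_one]
    rwa [ZMod.coe_unitOfCoprime, Nat.cast_ofNat] at h2
  have hdvd : (p:ℤ) ∣ 2 ^ d - 1 := by
    have : (((2:ℤ) ^ d - 1 : ℤ) : ZMod p) = 0 := by push_cast [hpow]; ring
    exact (ZMod.intCast_zmod_eq_zero_iff_dvd _ p).mp this
  obtain ⟨e, he⟩ := hdvd
  refine ⟨d, e, by linarith [he], ?_⟩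
  intro hpe
  apply hw
  have hdd : d ∣ p - 1 := by
    have := orderOf_dvd_card (x := u2p)
    rwa [ZMod.card_units_eq_totient, Nat.totient_prime hp] at this
  obtain ⟨r, hr⟩ := hdd
  have hsq : ((p:ℤ))^2 ∣ (2:ℤ) ^ (p-1) - 1 := by
    have h1 : ((p:ℤ))^2 ∣ (2:ℤ)^d - 1 := by
      obtain ⟨e', he'⟩ := hpe
      exact ⟨e', by rw [he, he']; ring⟩
    have h2 : (2:ℤ)^d - 1 ∣ (2:ℤ)^(p-1) - 1 := by
      have := sub_dvd_pow_sub_pow ((2:ℤ)^d) 1 r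
      rwa [← pow_mul, ← hr, one_pow] at this
    exact h1.trans h2
  rw [Nat.ModEq.comm, Nat.modEq_iff_dvd]
  convert hsq using 1 <;> push_cast <;> ring


private def nOf (p q : ℕ) (a : Fin q → ZMod p) : ℕ := ∑ i : Fin q, (a i).val * p ^ (i : ℕ)

private lemma nOf_fin (p q : ℕ) [NeZero p] (a : Fin q → ZMod p) :
    ((finFunctionFinEquiv (fun i => (⟨(a i).val, ZMod.val_lt _⟩ : Fin p)) : Fin (p ^ q)) : ℕ)
      = nOf p q a := by
  rw [finFunctionFinEquiv_apply]
  rfl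

private lemma nOf_lt (p q : ℕ) [NeZero p] (a : Fin q → ZMod p) : nOf p q a < p ^ q := by
  rw [← nOf_fin p q a]
  exact (finFunctionFinEquiv _).isLt

private lemma nOf_inj (p q : ℕ) [NeZero p] (a b : Fin q → ZMod p)
    (h : nOf p q a = nOf p q b) : a = b := by
  rw [← nOf_fin p q a, ← nOf_fin p q b] at h
  have h2 := finFunctionFinEquiv.injective (Fin.ext h)
  funext i
  have h3 := congrFun h2 i
  have h4 : (a i).val = (b i).val := congrArg Fin.val h3
  calc a i = ((a i).val : ZMod p) := (ZMod.natCast_rightInverse (a i)).symm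
    _ = ((b i).val : ZMod p) := by rw [h4]
    _ = b i := ZMod.natCast_rightInverse (b i)

private lemma phi_eq (p q : ℕ) (φ : (Fin q → ZMod p) → ZMod (p ^ q))
    (hφ : ∀ g : Fin q → ZMod p,
      φ g = ∑ i : Fin q, ((g i).val : ZMod (p ^ q)) * (p : ZMod (p ^ q)) ^ (i : ℕ))
    (a : Fin q → ZMod p) : φ a = ((nOf p q a : ℕ) : ZMod (p ^ q)) := by
  rw [hφ, nOf]
  push_cast
  rfl

private lemma phi_bij (p q : ℕ) (hp : p.Prime) (φ : (Fin q → ZMod p) → ZMod (p ^ q))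
    (hφ : ∀ g : Fin q → ZMod p,
      φ g = ∑ i : Fin q, ((g i).val : ZMod (p ^ q)) * (p : ZMod (p ^ q)) ^ (i : ℕ)) :
    Function.Bijective φ := by
  haveI : NeZero p := ⟨hp.pos.ne'⟩
  haveI : NeZero (p ^ q) := ⟨pow_ne_zero q hp.pos.ne'⟩
  have hinj : Function.Injective φ := by
    intro a b hab
    rw [phi_eq p q φ hφ a, phi_eq p q φ hφ b, ZMod.natCast_eq_natCast_iff] at hab
    have := hab.eq_of_lt_of_lt (nOf_lt p q a) (nOf_lt p q b)
    exact nOf_inj p q a b this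
  rw [Fintype.bijective_iff_injective_and_card]
  refine ⟨hinj, ?_⟩
  rw [ZMod.card, Fintype.card_fun, ZMod.card, Fintype.card_fin]




private lemma key_aux (p q : ℕ) (hp : p.Prime) (hodd : Odd p) (hq : 1 ≤ q)
    (hw : ¬ (2 ^ (p - 1) ≡ 1 [MOD p ^ 2])) (c : ZMod (p ^ q)) :
    ∃ l : ℕ, (2 : ZMod (p ^ q)) ^ l = 1 + p * c := by
  haveI : Fact p.Prime := ⟨hp⟩
  haveI : NeZero (p ^ q) := ⟨pow_ne_zero q hp.pos.ne'⟩
  obtain ⟨d, e, h0, he⟩ := base_aux p hp hodd hw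
  have h2p : Nat.Coprime 2 p := (Nat.coprime_primes Nat.prime_two hp).mpr
    (fun h => absurd hodd (by rw [← h]; decide))
  have h2pq : Nat.Coprime 2 (p ^ q) := h2p.pow_right q
  set u2 : (ZMod (p ^ q))ˣ := ZMod.unitOfCoprime 2 h2pq with hu2def
  have hu2 : (u2 : ZMod (p ^ q)) = 2 := by
    rw [hu2def, ZMod.coe_unitOfCoprime, Nat.cast_ofNat]
  set f := ZMod.unitsMap (dvd_pow_self p (by omega : q ≠ 0)) with hfdef
  set K := f.ker with hKdef
  -- cardinality of kernel
  have hcardG : Nat.card (ZMod (p ^ q))ˣ = p ^ (q - 1) * (p - 1) := by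
    rw [Nat.card_eq_fintype_card, ZMod.card_units_eq_totient,
      Nat.totient_prime_pow hp (by omega)]
  have hcardT : Nat.card (ZMod p)ˣ = p - 1 := by
    rw [Nat.card_eq_fintype_card, ZMod.card_units_eq_totient, Nat.totient_prime hp]
  have hindex : K.index = p - 1 := by
    rw [hKdef, Subgroup.index_ker, MonoidHom.range_eq_top_of_surjective f
      (ZMod.unitsMap_surjective _), ← hcardT]
    exact Subgroup.card_top
  have hcardK : Nat.card K = p ^ (q - 1) := by
    have := Subgroup.card_mul_index K
    rw [hindex, hcardG] at this
    have hp1 : 0 < p - 1 := by have := hp.two_le; omega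
    exact Nat.eq_of_mul_eq_mul_right hp1 this
  -- the element u2^d lies in K
  have hmem : u2 ^ d ∈ K := by
    have h2d : (2 : ZMod p) ^ d = 1 := by
      have : (((2:ℤ) ^ d : ℤ) : ZMod p) = ((1 + (p:ℤ) * e : ℤ) : ZMod p) := by rw [h0]
      push_cast at this
      simpa using this
    rw [hKdef, MonoidHom.mem_ker]
    ext
    rw [hfdef, ZMod.unitsMap_def, map_pow, Units.val_pow_eq_pow_val, Units.coe_map,
      Units.val_one, MonoidHom.coe_coe, hu2]
    rw [show ((ZMod.castHom _ (ZMod p)) (2 : ZMod (p^q)) = (2 : ZMod p)) from map_ofNat _ 2]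
    exact h2d
  -- order of u2^d is exactly p^(q-1)
  have hord : orderOf (u2 ^ d) = p ^ (q - 1) := by
    have hdvd1 : orderOf (u2 ^ d) ∣ p ^ (q - 1) := hcardK ▸ K.orderOf_dvd_natCard hmem
    obtain ⟨j, hj, hja⟩ := (Nat.dvd_prime_pow hp).mp hdvd1
    rcases lt_or_ge j (q - 1) with hlt | hge
    · exfalso
      have hj2 : j + 2 ≤ q := by omega
      have hone : (2 : ZMod (p ^ q)) ^ (d * p ^ j) = 1 := by
        have := pow_orderOf_eq_one (u2 ^ d)
        rw [hja] at this
        have h2 : ((u2 ^ d) ^ p ^ j : (ZMod (p^q))ˣ) = 1 := this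
        calc (2 : ZMod (p ^ q)) ^ (d * p ^ j) = ((u2:ZMod (p^q)) ^ d) ^ p ^ j := by
              rw [hu2, ← pow_mul]
          _ = (((u2 ^ d) ^ p ^ j : (ZMod (p^q))ˣ) : ZMod (p^q)) := by push_cast; ring
          _ = 1 := by rw [h2, Units.val_one]
      -- cast down to ZMod (p^(j+2))
      have hcast : (2 : ZMod (p ^ (j+2))) ^ (d * p ^ j) = 1 := by
        have := congrArg (ZMod.castHom (pow_dvd_pow p hj2) (ZMod (p ^ (j+2)))) hone
        rwa [map_pow, map_ofNat, map_one] at this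
      obtain ⟨t, ht, hmod⟩ := lift_aux p hp hodd d e he h0 j
      have hmod2 : (2:ℤ) ^ (d * p ^ j) ≡ 1 + (p:ℤ) ^ (j+1) * t [ZMOD ((p ^ (j+2) : ℕ) : ℤ)] := by
        push_cast
        exact hmod
      have hmod' := (ZMod.intCast_eq_intCast_iff _ _ (p ^ (j+2))).mpr hmod2
      push_cast at hmod'
      rw [hcast] at hmod'
      have hzero : (((p:ℤ) ^ (j+1) * t : ℤ) : ZMod (p ^ (j+2))) = 0 := by
        push_cast
        linear_combination -hmod'
      rw [ZMod.intCast_zmod_eq_zero_iff_dvd] at hzero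
      apply ht
      have : ((p:ℤ) ^ (j+1) * p) ∣ ((p:ℤ) ^ (j+1) * t) := by
        convert hzero using 2
        push_cast
        ring
      exact (mul_dvd_mul_iff_left (pow_ne_zero (j+1) (by exact_mod_cast hp.pos.ne' : (p:ℤ) ≠ 0))).mp this
    · rw [hja]
      congr 1
      omega
  -- the subgroup generated by u2^d equals K
  have hzpow : Subgroup.zpowers (u2 ^ d) = K := by
    refine Subgroup.eq_of_le_of_card_ge ((Subgroup.zpowers_le).mpr hmem) ?_
    rw [hcardK, Nat.card_zpowers, hord]
  -- 1 + p * c is a unit in K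
  have hnil : IsNilpotent ((p : ZMod (p ^ q)) * c) := by
    refine ⟨q, ?_⟩
    rw [mul_pow]
    have : ((p : ZMod (p ^ q))) ^ q = 0 := by
      rw [← Nat.cast_pow, ZMod.natCast_self]
    rw [this, zero_mul]
  have hv : IsUnit (1 + (p : ZMod (p ^ q)) * c) := hnil.isUnit_one_add
  obtain ⟨vu, hvu⟩ := hv
  have hvK : vu ∈ K := by
    rw [hKdef, MonoidHom.mem_ker]
    ext
    rw [hfdef, ZMod.unitsMap_def, Units.coe_map, Units.val_one, MonoidHom.coe_coe, hvu]
    rw [map_add, map_one, map_mul, map_natCast, ZMod.natCast_self, zero_mul, add_zero]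
  rw [← hzpow, ← mem_powers_iff_mem_zpowers] at hvK
  obtain ⟨l, hl⟩ := hvK
  refine ⟨d * l, ?_⟩
  calc (2 : ZMod (p ^ q)) ^ (d * l) = (((u2 ^ d) ^ l : (ZMod (p^q))ˣ) : ZMod (p^q)) := by
        push_cast [hu2]; rw [← pow_mul]
    _ = 1 + (p : ZMod (p ^ q)) * c := by rw [show (u2 ^ d) ^ l = vu from hl, hvu]





private lemma step_aux (p q : ℕ) (hp : p.Prime) (hodd : Odd p) (hq : 1 ≤ q)
    (hw : ¬ (2 ^ (p - 1) ≡ 1 [MOD p ^ 2]))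
    (φ : (Fin q → ZMod p) → ZMod (p ^ q))
    (hφ : ∀ g : Fin q → ZMod p,
      φ g = ∑ i : Fin q, ((g i).val : ZMod (p ^ q)) * (p : ZMod (p ^ q)) ^ (i : ℕ))
    (a h : Fin q → ZMod p) (m : ℕ) :
    ∃ l : ℕ, φ ((2 : ZMod p) ^ m • a + h) = (2 : ZMod (p ^ q)) ^ l * φ a + φ h := by
  haveI : Fact p.Prime := ⟨hp⟩
  haveI : NeZero p := ⟨hp.pos.ne'⟩
  haveI : NeZero (p ^ q) := ⟨pow_ne_zero q hp.pos.ne'⟩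
  by_cases ha : a = 0
  · refine ⟨0, ?_⟩
    subst ha
    rw [smul_zero, zero_add, pow_zero, one_mul]
    have : φ (0 : Fin q → ZMod p) = 0 := by
      rw [hφ]
      simp
    rw [this, zero_add]
  -- the minimal nonzero digit
  · have hne : ∃ i, a i ≠ 0 := Function.ne_iff.mp ha
    set s : Finset (Fin q) := Finset.univ.filter (fun i => a i ≠ 0) with hsdef
    have hs : s.Nonempty := by
      obtain ⟨i, hi⟩ := hne
      exact ⟨i, by simp [hsdef, hi]⟩
    set k : Fin q := s.min' hs with hkdef
    have hak : a k ≠ 0 := (Finset.mem_filter.mp (s.min'_mem hs)).2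
    have hlt : ∀ i : Fin q, i < k → a i = 0 := by
      intro i hik
      by_contra hia
      exact absurd (s.min'_le i (by simp [hsdef, hia])) (not_le.mpr hik)
    set A : Fin q → ZMod p := (2 : ZMod p) ^ m • a with hAdef
    have hA : ∀ i, A i = 2 ^ m * a i := fun i => rfl
    -- the integer-level difference
    set B : Fin q → ℤ := fun i =>
      (((A + h) i).val : ℤ) - ((h i).val : ℤ) - 2 ^ m * ((a i).val : ℤ) with hBdef
    have hdvd_i : ∀ i : Fin q, (p:ℤ) ^ ((k:ℕ) + 1) ∣ B i * (p:ℤ) ^ (i:ℕ) := by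
      intro i
      rcases lt_or_ge i k with hik | hik
      · have hai : a i = 0 := hlt i hik
        have hAi : A i = 0 := by rw [hA, hai, mul_zero]
        have hBi : B i = 0 := by
          rw [hBdef]
          simp only [Pi.add_apply, hAi, zero_add, hai, ZMod.val_zero]
          push_cast
          ring
        rw [hBi, zero_mul]
        exact dvd_zero _
      · have hpB : (p:ℤ) ∣ B i := by
          have hcast : ((B i : ℤ) : ZMod p) = 0 := by
            show (((((A + h) i).val : ℤ) - ((h i).val : ℤ) - 2 ^ m * ((a i).val : ℤ) : ℤ) : ZMod p) = 0
            push_cast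
            simp only [ZMod.natCast_val, ZMod.cast_id]
            rw [Pi.add_apply, hA i]
            ring
          exact (ZMod.intCast_zmod_eq_zero_iff_dvd _ p).mp hcast
        rw [pow_succ]
        rw [mul_comm ((p:ℤ) ^ (k:ℕ)) (p:ℤ)]
        exact mul_dvd_mul hpB (pow_dvd_pow _ hik)
    -- package the divisibility
    set Z : ℤ := ∑ i : Fin q, B i * (p:ℤ) ^ (i:ℕ) with hZdef
    obtain ⟨z, hz⟩ : (p:ℤ) ^ ((k:ℕ)+1) ∣ Z := Finset.dvd_sum (fun i _ => hdvd_i i)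
    have hZcast : ((Z : ℤ) : ZMod (p ^ q)) = φ (A + h) - φ h - 2 ^ m * φ a := by
      rw [hφ (A + h), hφ h, hφ a, hZdef]
      push_cast
      rw [Finset.mul_sum, ← Finset.sum_sub_distrib, ← Finset.sum_sub_distrib]
      apply Finset.sum_congr rfl
      intro i _
      push_cast [hBdef]
      ring
    -- p^k exactly divides nOf a
    obtain ⟨s0, hs0⟩ : p ^ (k:ℕ) ∣ nOf p q a := by
      refine Finset.dvd_sum (fun i _ => ?_)
      rcases lt_or_ge i k with hik | hik
      · rw [hlt i hik, ZMod.val_zero, zero_mul]; exact dvd_zero _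
      · exact ((pow_dvd_pow p (show (k:ℕ) ≤ (i:ℕ) from hik)).mul_left _)
    have hps0 : ¬ p ∣ s0 := by
      intro hdvd
      have h1 : p ^ ((k:ℕ)+1) ∣ nOf p q a := by
        obtain ⟨w, hwv⟩ := hdvd
        exact ⟨w, by rw [hs0, hwv, pow_succ]; ring⟩
      have hsplit : (a k).val * p ^ ((k:ℕ)) +
          ∑ i ∈ Finset.univ.erase k, (a i).val * p ^ (i:ℕ) = nOf p q a := by
        simp only [nOf]
        exact Finset.add_sum_erase Finset.univ (fun i : Fin q => (a i).val * p ^ (i:ℕ)) (Finset.mem_univ k)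
      have hrest : p ^ ((k:ℕ)+1) ∣ ∑ i ∈ Finset.univ.erase k, (a i).val * p ^ (i:ℕ) := by
        refine Finset.dvd_sum (fun i hi => ?_)
        have hik : i ≠ k := (Finset.mem_erase.mp hi).1
        rcases lt_or_ge i k with h2 | h2
        · rw [hlt i h2, ZMod.val_zero, zero_mul]; exact dvd_zero _
        · have h3 : (k:ℕ) + 1 ≤ (i:ℕ) := by
            have h4 : k < i := lt_of_le_of_ne h2 (Ne.symm hik)
            exact Fin.lt_def.mp h4
          exact ((pow_dvd_pow p h3).mul_left _)
      have hterm : p ^ ((k:ℕ)+1) ∣ (a k).val * p ^ (k:ℕ) := by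
        have h5 := h1
        rw [← hsplit] at h5
        rw [add_comm ((a k).val * p ^ (k:ℕ))] at h5
        exact (Nat.dvd_add_right hrest).mp h5
      have hdvd2 : p ∣ (a k).val := by
        rw [pow_succ, mul_comm ((a k).val)] at hterm
        exact (Nat.mul_dvd_mul_iff_left (pow_pos hp.pos (k:ℕ))).mp hterm
      have hvz : (a k).val = 0 := by
        rcases Nat.eq_zero_or_pos ((a k).val) with h6 | h6
        · exact h6
        · exact absurd (Nat.le_of_dvd h6 hdvd2) (not_le.mpr (ZMod.val_lt (a k)))
      exact hak ((ZMod.val_eq_zero _).mp hvz)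
    -- s0 is a unit mod p^q
    have hunit_s0 : IsUnit ((s0 : ℕ) : ZMod (p ^ q)) := by
      rw [ZMod.isUnit_iff_coprime]
      exact Nat.Coprime.pow_right q (Nat.coprime_comm.mp (hp.coprime_iff_not_dvd.mpr hps0))
    obtain ⟨w0, hw0⟩ := hunit_s0
    have hphia : φ a = (p : ZMod (p ^ q)) ^ (k:ℕ) * ((s0 : ℕ) : ZMod (p ^ q)) := by
      rw [phi_eq p q φ hφ a, hs0]
      push_cast
      ring
    -- order of 2
    have h2cop : Nat.Coprime 2 (p ^ q) :=
      Nat.Coprime.pow_right q ((Nat.coprime_primes Nat.prime_two hp).mpr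
        (fun hh => absurd hodd (by rw [← hh]; decide)))
    set u2 : (ZMod (p ^ q))ˣ := ZMod.unitOfCoprime 2 h2cop with hu2def
    have hu2 : (u2 : ZMod (p ^ q)) = 2 := by
      rw [hu2def, ZMod.coe_unitOfCoprime, Nat.cast_ofNat]
    set o := orderOf (2 : ZMod (p ^ q)) with hodef
    have ho1 : 1 ≤ o := by
      rw [hodef, ← hu2, orderOf_units]
      exact orderOf_pos u2
    have ho : (2 : ZMod (p ^ q)) ^ o = 1 := pow_orderOf_eq_one 2
    set zc : ZMod (p ^ q) := ((z : ℤ) : ZMod (p ^ q)) with hzcdef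
    set w0i : ZMod (p ^ q) := ((w0⁻¹ : (ZMod (p ^ q))ˣ) : ZMod (p ^ q)) with hw0idef
    obtain ⟨l₀, hl₀⟩ := key_aux p q hp hodd hq hw ((2:ZMod (p ^ q)) ^ (m*(o-1)) * w0i * zc)
    refine ⟨m + l₀, ?_⟩
    have hE1 : φ (A + h) - φ h - 2 ^ m * φ a
        = (p : ZMod (p ^ q)) ^ ((k:ℕ)+1) * zc := by
      rw [← hZcast, hz]
      push_cast
      ring
    have hE6 : (2 : ZMod (p ^ q)) ^ m * (2 : ZMod (p ^ q)) ^ (m*(o-1)) = 1 := by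
      rw [← pow_add]
      have h2 : m + m * (o - 1) = m * o := by
        have h3 : o - 1 + 1 = o := by omega
        calc m + m * (o - 1) = m * (o - 1) + m := by ring
          _ = m * (o - 1 + 1) := (Nat.mul_succ m (o - 1)).symm
          _ = m * o := by rw [h3]
      rw [h2, mul_comm m o, pow_mul, ho, one_pow]
    have hE5 : w0i * ((s0 : ℕ) : ZMod (p ^ q)) = 1 := by
      rw [hw0idef, ← hw0]
      exact w0.inv_mul
    rw [pow_add, hl₀]
    linear_combination hE1 - ((2:ZMod (p ^ q)) ^ m * (p : ZMod (p ^ q)) *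
        ((2:ZMod (p ^ q)) ^ (m*(o-1)) * w0i * zc)) * hphia -
      ((p : ZMod (p ^ q)) ^ ((k:ℕ)+1) * zc * w0i * ((s0 : ℕ) : ZMod (p ^ q))) * hE6 -
      ((p : ZMod (p ^ q)) ^ ((k:ℕ)+1) * zc) * hE5


theorem stmt15 (p q : ℕ) (hp : p.Prime) (hodd : Odd p) (hq : 1 ≤ q)
    (hw : ¬ (2 ^ (p - 1) ≡ 1 [MOD p ^ 2]))
    (φ : (Fin q → ZMod p) → ZMod (p ^ q))
    (hφ : ∀ g : Fin q → ZMod p,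
      φ g = ∑ i : Fin q, ((g i).val : ZMod (p ^ q)) * (p : ZMod (p ^ q)) ^ (i : ℕ))
    (x : ZMod (p ^ q)) (g : Fin q → ZMod p)
    (hg : φ g ∈ {y : ZMod (p ^ q) | ∃ m : ℕ, y = (2 : ZMod (p ^ q)) ^ m * x}) :
    (∀ (h : Fin q → ZMod p) (m : ℕ),
        φ ((2 : ZMod p) ^ m • g + h)
          ∈ {y : ZMod (p ^ q) | ∃ l : ℕ, y = (2 : ZMod (p ^ q)) ^ l * x + φ h}) ∧
      ∀ h : Fin q → ZMod p,
        φ '' {w : Fin q → ZMod p |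
            ∃ g' ∈ φ ⁻¹' {y : ZMod (p ^ q) | ∃ m : ℕ, y = (2 : ZMod (p ^ q)) ^ m * x},
              w = g' + h}
          = {y : ZMod (p ^ q) | ∃ l : ℕ, y = (2 : ZMod (p ^ q)) ^ l * x + φ h} := by
  haveI : NeZero (p ^ q) := ⟨pow_ne_zero q hp.pos.ne'⟩
  obtain ⟨m0, hm0⟩ := hg
  have hbij := phi_bij p q hp φ hφ
  constructor
  · intro h m
    obtain ⟨l, hl⟩ := step_aux p q hp hodd hq hw φ hφ g h m
    exact ⟨l + m0, by rw [hl, hm0, ← mul_assoc, ← pow_add]⟩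
  · intro h
    ext y
    simp only [Set.mem_image, Set.mem_setOf_eq, Set.mem_preimage]
    constructor
    · rintro ⟨w, ⟨g', ⟨m1, hg'⟩, rfl⟩, rfl⟩
      obtain ⟨l, hl⟩ := step_aux p q hp hodd hq hw φ hφ g' h 0
      rw [pow_zero, one_smul] at hl
      exact ⟨l + m1, by rw [hl, hg', ← mul_assoc, ← pow_add]⟩
    · rintro ⟨l, rfl⟩
      obtain ⟨w, hw'⟩ := hbij.surjective ((2 : ZMod (p ^ q)) ^ l * x + φ h)
      obtain ⟨l1, hl1⟩ := step_aux p q hp hodd hq hw φ hφ (w - h) h 0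
      rw [pow_zero, one_smul, sub_add_cancel] at hl1
      have heq : (2 : ZMod (p ^ q)) ^ l1 * φ (w - h) = 2 ^ l * x :=
        add_right_cancel (hl1.symm.trans hw')
      have h2cop : Nat.Coprime 2 (p ^ q) :=
        Nat.Coprime.pow_right q ((Nat.coprime_primes Nat.prime_two hp).mpr
          (fun hh => absurd hodd (by rw [← hh]; decide)))
      set u2 : (ZMod (p ^ q))ˣ := ZMod.unitOfCoprime 2 h2cop with hu2def
      have hu2 : (u2 : ZMod (p ^ q)) = 2 := by
        rw [hu2def, ZMod.coe_unitOfCoprime, Nat.cast_ofNat]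
      set o := orderOf (2 : ZMod (p ^ q)) with hodef
      have ho1 : 1 ≤ o := by
        rw [hodef, ← hu2, orderOf_units]
        exact orderOf_pos u2
      have ho : (2 : ZMod (p ^ q)) ^ o = 1 := pow_orderOf_eq_one 2
      refine ⟨w, ⟨w - h, ⟨l1 * (o - 1) + l, ?_⟩, by rw [sub_add_cancel]⟩, hw'⟩
      calc φ (w - h) = 2 ^ (l1 * (o - 1)) * (2 ^ l1 * φ (w - h)) := by
            rw [← mul_assoc, ← pow_add]
            have h2 : l1 * (o - 1) + l1 = l1 * o := by
              have h3 : o - 1 + 1 = o := by omega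
              calc l1 * (o - 1) + l1 = l1 * (o - 1 + 1) := (Nat.mul_succ l1 (o - 1)).symm
                _ = l1 * o := by rw [h3]
            rw [h2, mul_comm l1 o, pow_mul, ho, one_pow, one_mul]
        _ = 2 ^ (l1 * (o - 1) + l) * x := by rw [heq, ← mul_assoc, ← pow_add]
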